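/- Let D₁ = {t ∈ [a,b] ∩ N_g⁻ : t is an accumulation point of D_g ∩ [a,t)}, D₂ = {t ∈ [a,b] ∩ N_g⁺ : t is an accumulation point of D_g ∩ (t,b]}, D₃ = {t ∈ [a,b] \ (N_g ∪ D_g) : t is an accumulation point of D_g ∩ [a,b]}. For t ∈ [a,b]: (1) if t* ∈ D₁ ∪ D₂ ∪ D₃, then the restriction Δg|_{[a,b]} is g-differentiable at t if and only if lim_{s→t*, s∈D_g} Δg(s)/(g(s) − g(t)) = 0 (the limit being the appropriate one-sided limit matching the definition of the Stieltjes derivative at t*); (2) in any other case, Δg|_{[a,b]} is g-differentiable at t. Moreover, whenever Δg|_{[a,b]} is g-differentiable at t, (Δg|_{[a,b]})'_g(t) = −χ_{D_g}(t*), where χ_{D_g} is the indicator function of D_g. -/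

import Mathlib

open Set Filter Topology
open scoped Classical

noncomputable section

/-- The right-hand limit `g(t⁺)` of a nondecreasing function `g`. -/
def rLim (g : ℝ → ℝ) (t : ℝ) : ℝ := sInf (g '' Set.Ioi t)

/-- `Δg(t) = g(t⁺) − g(t)`. -/
def jump (g : ℝ → ℝ) (t : ℝ) : ℝ := rLim g t - g t

/-- `C_g`: the set of points near which `g` is constant. -/
def Cset (g : ℝ → ℝ) : Set ℝ :=
  {t | ∃ ε > 0, ∀ u ∈ Set.Ioo (t - ε) (t + ε), g u = g t}

/-- `D_g`: the set of discontinuity points of `g`. -/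
def Dset (g : ℝ → ℝ) : Set ℝ := {t | 0 < jump g t}

/-- The right endpoints `b_n` of the connected components of the open set `C_g`. -/
def rightEndpoints (g : ℝ → ℝ) : Set ℝ :=
  {x | x ∉ Cset g ∧ ∃ s, s < x ∧ Set.Ioo s x ⊆ Cset g}

/-- The left endpoints `a_n` of the connected components of the open set `C_g`. -/
def leftEndpoints (g : ℝ → ℝ) : Set ℝ :=
  {x | x ∉ Cset g ∧ ∃ s, x < s ∧ Set.Ioo x s ⊆ Cset g}

/-- `N_g⁻ = {a_n : n ∈ Λ} \ D_g`. -/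
def Nminus (g : ℝ → ℝ) : Set ℝ := leftEndpoints g \ Dset g

/-- `N_g⁺ = {b_n : n ∈ Λ} \ D_g`. -/
def Nplus (g : ℝ → ℝ) : Set ℝ := rightEndpoints g \ Dset g

/-- `N_g = N_g⁻ ∪ N_g⁺`. -/
def Nset (g : ℝ → ℝ) : Set ℝ := Nminus g ∪ Nplus g

/-- `t* = t` if `t ∉ C_g`, and `t* = b_n` (the right endpoint of the connected component
`(a_n, b_n)` of `C_g` containing `t`) if `t ∈ C_g`. -/
def tstar (g : ℝ → ℝ) (t : ℝ) : ℝ :=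
  if t ∈ Cset g then sSup (connectedComponentIn (Cset g) t) else t

/-- The filter along which the Stieltjes difference quotient is taken at a point of `[a,b]`:
from the right at points of `D_g ∪ N_g⁺ ∪ {a}`, from the left at points of `N_g⁻ ∪ {b}`,
two-sided otherwise. -/
def sFilter (g : ℝ → ℝ) (a b t : ℝ) : Filter ℝ :=
  if t ∈ Dset g ∨ t ∈ Nplus g ∨ t = a then 𝓝[Set.Ioi t ∩ Set.Icc a b] t
  else if t ∈ Nminus g ∨ t = b then 𝓝[Set.Iio t ∩ Set.Icc a b] t
  else 𝓝[Set.Icc a b \ {t}] t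

/-- `f` has Stieltjes derivative (`g`-derivative) `L` at `t`, relative to `[a,b]`. -/
def HasSDerivAt {K : Type*} [RCLike K] (g : ℝ → ℝ) (a b : ℝ) (f : ℝ → K) (t : ℝ) (L : K) :
    Prop :=
  Filter.Tendsto (fun s => (g s - g (tstar g t))⁻¹ • (f s - f (tstar g t)))
    (sFilter g a b (tstar g t)) (𝓝 L)

/-- `f` is `g`-differentiable at `t`, relative to `[a,b]`. -/
def SDiffAt {K : Type*} [RCLike K] (g : ℝ → ℝ) (a b : ℝ) (f : ℝ → K) (t : ℝ) : Prop :=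
  ∃ L, HasSDerivAt g a b f t L

/-- `f` is `g`-continuous at `t` relative to the domain `D`. -/
def GContAt {K : Type*} [RCLike K] (g : ℝ → ℝ) (f : ℝ → K) (D : Set ℝ) (t : ℝ) : Prop :=
  ∀ ε > 0, ∃ δ > 0, ∀ s ∈ D, |g t - g s| < δ → ‖f t - f s‖ < ε

/-- `D₁`: points of `[a,b] ∩ N_g⁻` accumulating `D_g ∩ [a,t)`. -/
def D1 (g : ℝ → ℝ) (a b : ℝ) : Set ℝ :=
  {x | x ∈ Set.Icc a b ∩ Nminus g ∧ AccPt x (𝓟 (Dset g ∩ Set.Ico a x))}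

/-- `D₂`: points of `[a,b] ∩ N_g⁺` accumulating `D_g ∩ (t,b]`. -/
def D2 (g : ℝ → ℝ) (a b : ℝ) : Set ℝ :=
  {x | x ∈ Set.Icc a b ∩ Nplus g ∧ AccPt x (𝓟 (Dset g ∩ Set.Ioc x b))}

/-- `D₃`: points of `[a,b] \ (N_g ∪ D_g)` accumulating `D_g ∩ [a,b]`. -/
def D3 (g : ℝ → ℝ) (a b : ℝ) : Set ℝ :=
  {x | x ∈ Set.Icc a b \ (Nset g ∪ Dset g) ∧ AccPt x (𝓟 (Dset g ∩ Set.Icc a b))}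

/-- `D̃₁`: points of `[a,b] ∩ N_g⁻` not accumulating `D_g ∩ [a,t)`. -/
def Dt1 (g : ℝ → ℝ) (a b : ℝ) : Set ℝ :=
  {x | x ∈ Set.Icc a b ∩ Nminus g ∧ ¬ AccPt x (𝓟 (Dset g ∩ Set.Ico a x))}

/-- `D̃₂`: points of `[a,b] ∩ (N_g⁺ ∪ D_g)` not accumulating `D_g ∩ (t,b]`. -/
def Dt2 (g : ℝ → ℝ) (a b : ℝ) : Set ℝ :=
  {x | x ∈ Set.Icc a b ∩ (Nplus g ∪ Dset g) ∧ ¬ AccPt x (𝓟 (Dset g ∩ Set.Ioc x b))}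

/-- `D̃₃`: points of `[a,b] \ (C_g ∪ N_g ∪ D_g)` not accumulating `D_g ∩ [a,b]`. -/
def Dt3 (g : ℝ → ℝ) (a b : ℝ) : Set ℝ :=
  {x | x ∈ Set.Icc a b \ (Cset g ∪ Nset g ∪ Dset g) ∧ ¬ AccPt x (𝓟 (Dset g ∩ Set.Icc a b))}

/-- `C₁`: points of `[a,b] ∩ N_g⁻` accumulating `C_g ∩ [a,t)`. -/
def C1 (g : ℝ → ℝ) (a b : ℝ) : Set ℝ :=
  {x | x ∈ Set.Icc a b ∩ Nminus g ∧ AccPt x (𝓟 (Cset g ∩ Set.Ico a x))}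

/-- `C₂`: points of `[a,b] ∩ (N_g⁺ ∪ D_g)` accumulating `C_g ∩ (t,b]`. -/
def C2 (g : ℝ → ℝ) (a b : ℝ) : Set ℝ :=
  {x | x ∈ Set.Icc a b ∩ (Nplus g ∪ Dset g) ∧ AccPt x (𝓟 (Cset g ∩ Set.Ioc x b))}

/-- `C₃`: points of `[a,b] \ (C_g ∪ N_g ∪ D_g)` accumulating `C_g ∩ [a,b]`. -/
def C3 (g : ℝ → ℝ) (a b : ℝ) : Set ℝ :=
  {x | x ∈ Set.Icc a b \ (Cset g ∪ Nset g ∪ Dset g) ∧ AccPt x (𝓟 (Cset g ∩ Set.Icc a b))}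

/-- `A_g = {t : sup{s ∈ [a,b] : g(s) = g(t)} ∈ D_g}`. -/
def Ag (g : ℝ → ℝ) (a b : ℝ) : Set ℝ :=
  {t | sSup {s | s ∈ Set.Icc a b ∧ g s = g t} ∈ Dset g}

/-- `H_g`: points lying in some `(s₁, s₂]` with `s₁, s₂ ∈ D_g` and `(s₁, s₂) ⊆ C_g`. -/
def Hg (g : ℝ → ℝ) : Set ℝ :=
  {t | ∃ s₁ ∈ Dset g, ∃ s₂ ∈ Dset g, t ∈ Set.Ioc s₁ s₂ ∧ Set.Ioo s₁ s₂ ⊆ Cset g}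

/-- Membership in `BC_g([a,b], K)`: bounded and `g`-continuous on `[a,b]`. -/
def MemBCg {K : Type*} [RCLike K] (g : ℝ → ℝ) (a b : ℝ) (f : ℝ → K) : Prop :=
  (∃ M, ∀ s ∈ Set.Icc a b, ‖f s‖ ≤ M) ∧ ∀ s ∈ Set.Icc a b, GContAt g f (Set.Icc a b) s

/-- Membership in `BC¹_g([a,b], K)`. -/
def MemBC1g {K : Type*} [RCLike K] (g : ℝ → ℝ) (a b : ℝ) (f : ℝ → K) : Prop :=
  MemBCg g a b f ∧
    ∃ f' : ℝ → K, (∀ s ∈ Set.Icc a b, HasSDerivAt g a b f s (f' s)) ∧ MemBCg g a b f'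


section Helpers

variable {g : ℝ → ℝ}

lemma jump_nonneg (hg : Monotone g) (t : ℝ) : 0 ≤ jump g t := by
  have h : g t ≤ sInf (g '' Set.Ioi t) :=
    le_csInf ⟨g (t+1), ⟨t+1, by simp, rfl⟩⟩ (by rintro y ⟨u, hu, rfl⟩; exact hg hu.le)
  simp only [jump, rLim]; linarith

lemma jump_eq_zero (hg : Monotone g) {t : ℝ} (h : t ∉ Dset g) : jump g t = 0 :=
  le_antisymm (not_lt.1 h) (jump_nonneg hg t)

lemma tendsto_rLim (hg : Monotone g) (x : ℝ) : Tendsto g (𝓝[>] x) (𝓝 (rLim g x)) :=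
  hg.tendsto_nhdsGT x

lemma rLim_le (hg : Monotone g) {x s : ℝ} (h : x < s) : rLim g x ≤ g s :=
  csInf_le (hg.map_bddBelow bddBelow_Ioi) ⟨s, h, rfl⟩

lemma countable_Dset (hg : Monotone g) : (Dset g).Countable := by
  apply hg.countable_not_continuousAt.mono
  intro x hx hc
  have h1 : Tendsto g (𝓝[>] x) (𝓝 (g x)) := hc.tendsto.mono_left nhdsWithin_le_nhds
  have h2 := tendsto_rLim hg x
  have h3 : rLim g x = g x := tendsto_nhds_unique h2 h1
  simp only [Dset, jump, h3, Set.mem_setOf_eq, sub_self, lt_irrefl] at hx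

lemma tendsto_jump (hg : Monotone g) (x : ℝ) : Tendsto (jump g) (𝓝[>] x) (𝓝 0) := by
  rw [NormedAddCommGroup.tendsto_nhds_zero]
  intro ε hε
  have h2 := tendsto_rLim hg x
  have hev : ∀ᶠ y in 𝓝[>] x, g y < rLim g x + ε :=
    h2.eventually (eventually_lt_nhds (by linarith))
  obtain ⟨y, hy, hxy⟩ := (hev.and self_mem_nhdsWithin).exists
  filter_upwards [Ioo_mem_nhdsGT_of_mem (⟨le_refl x, hxy⟩ : x ∈ Set.Ico x y)] with s hs
  have h4 : rLim g s ≤ g y := csInf_le (hg.map_bddBelow bddBelow_Ioi) ⟨y, hs.2, rfl⟩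
  have h5 : rLim g x ≤ g s := rLim_le hg hs.1
  have h6 : 0 ≤ jump g s := jump_nonneg hg s
  rw [Real.norm_eq_abs, abs_of_nonneg h6]
  simp only [jump] at *
  linarith

lemma isOpen_Cset : IsOpen (Cset g) := by
  rw [Metric.isOpen_iff]
  rintro t ⟨ε, hε, h⟩
  refine ⟨ε/2, by linarith, fun u hu => ?_⟩
  rw [Metric.mem_ball, Real.dist_eq] at hu
  obtain ⟨hu1, hu2⟩ := abs_lt.1 hu
  have hut : u ∈ Set.Ioo (t-ε) (t+ε) := ⟨by linarith, by linarith⟩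
  refine ⟨ε/2, by linarith, fun v hv => ?_⟩
  have hvt : v ∈ Set.Ioo (t-ε) (t+ε) := ⟨by linarith [hv.1], by linarith [hv.2]⟩
  rw [h v hvt, h u hut]

lemma g_const_of_Icc {t u : ℝ} (hsub : Set.Icc t u ⊆ Cset g) (htu : t ≤ u) : g u = g t := by
  set S := {v | v ∈ Set.Icc t u ∧ g v = g t} with hS
  have htS : t ∈ S := ⟨⟨le_refl t, htu⟩, rfl⟩
  have hne : S.Nonempty := ⟨t, htS⟩
  have hbdd : BddAbove S := ⟨u, fun v hv => hv.1.2⟩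
  set c := sSup S with hc
  have hcmem : c ∈ Set.Icc t u := ⟨le_csSup hbdd htS, csSup_le hne fun v hv => hv.1.2⟩
  obtain ⟨ε, hε, hconst⟩ := hsub hcmem
  obtain ⟨v, hvS, hvc⟩ := exists_lt_of_lt_csSup hne (by linarith : c - ε < c)
  have hvlec : v ≤ c := le_csSup hbdd hvS
  have hgc : g c = g t := by
    rcases eq_or_lt_of_le hvlec with h | h
    · rw [← h]; exact hvS.2
    · rw [← hconst v ⟨hvc, by linarith⟩]; exact hvS.2
  by_contra hne'
  have hcu : c < u := lt_of_le_of_ne hcmem.2 (fun h => hne' (h ▸ hgc))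
  have hwc : c < min (c + ε/2) u := lt_min (by linarith) hcu
  have hw1 : min (c + ε/2) u ≤ c + ε/2 := min_le_left _ _
  have hwS : min (c + ε/2) u ∈ S := by
    refine ⟨⟨le_trans hcmem.1 hwc.le, min_le_right _ _⟩, ?_⟩
    rw [hconst _ ⟨by linarith, by linarith⟩]; exact hgc
  exact absurd (le_csSup hbdd hwS) (not_le.2 hwc)

lemma tstar_facts (hlc : ∀ x : ℝ, ContinuousWithinAt g (Set.Iio x) x)
    {t b : ℝ} (ht : t ∈ Cset g) (htb : t ≤ b) (hb : b ∉ Cset g) :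
    t < tstar g t ∧ tstar g t ≤ b ∧ g (tstar g t) = g t := by
  set K := connectedComponentIn (Cset g) t with hK
  have htK : t ∈ K := mem_connectedComponentIn ht
  have hKne : K.Nonempty := ⟨t, htK⟩
  have hKopen : IsOpen K := isOpen_Cset.connectedComponentIn
  have hKsub : K ⊆ Cset g := connectedComponentIn_subset _ _
  have hKord : K.OrdConnected := isPreconnected_connectedComponentIn.ordConnected
  have hbddA : BddAbove K := by
    refine ⟨b, fun v hv => ?_⟩
    by_contra hvb
    exact hb (hKsub (hKord.out htK hv ⟨htb, (not_le.1 hvb).le⟩))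
  have hts : tstar g t = sSup K := by rw [tstar, if_pos ht]
  have hlt : t < sSup K := by
    obtain ⟨δ, hδ, hball⟩ := Metric.isOpen_iff.1 hKopen t htK
    have h2 : t + δ/2 ∈ K := hball (by
      rw [Metric.mem_ball, Real.dist_eq, abs_of_nonneg] <;> linarith)
    calc t < t + δ/2 := by linarith
    _ ≤ sSup K := le_csSup hbddA h2
  have hIoo : Set.Ioo t (sSup K) ⊆ K := by
    rintro v ⟨hv1, hv2⟩
    obtain ⟨w, hwK, hvw⟩ := exists_lt_of_lt_csSup hKne hv2
    exact hKord.out htK hwK ⟨hv1.le, hvw.le⟩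
  have hgconst : ∀ v ∈ K, g v = g t := by
    intro v hv
    rcases le_total t v with h | h
    · exact g_const_of_Icc (fun w hw => hKsub (hKord.out htK hv hw)) h
    · exact (g_const_of_Icc (fun w hw => hKsub (hKord.out hv htK hw)) h).symm
  have hsb : sSup K ≤ b := csSup_le hKne fun v hv => by
    by_contra hvb
    exact hb (hKsub (hKord.out htK hv ⟨htb, (not_le.1 hvb).le⟩))
  have h1 : Tendsto g (𝓝[Set.Ioo t (sSup K)] (sSup K)) (𝓝 (g (sSup K))) :=
    (hlc (sSup K)).tendsto.mono_left (nhdsWithin_mono _ (fun v hv => hv.2))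
  have h2 : Tendsto g (𝓝[Set.Ioo t (sSup K)] (sSup K)) (𝓝 (g t)) := by
    refine Tendsto.congr' ?_ tendsto_const_nhds
    filter_upwards [self_mem_nhdsWithin] with v hv
    exact (hgconst v (hIoo hv)).symm
  haveI : (𝓝[Set.Ioo t (sSup K)] (sSup K)).NeBot := by
    rw [← mem_closure_iff_nhdsWithin_neBot, closure_Ioo (ne_of_lt hlt)]
    exact ⟨hlt.le, le_refl _⟩
  have h3 := tendsto_nhds_unique h1 h2
  rw [hts]
  exact ⟨hlt, hsb, h3⟩

end Helpers

/-- `g`-differentiability of `Δg` restricted to `[a,b]`, with the value of the derivative. -/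
theorem stmt7 (g : ℝ → ℝ) (hg : Monotone g)
    (hlc : ∀ x : ℝ, ContinuousWithinAt g (Set.Iio x) x)
    (a b : ℝ) (hab : a < b) (ha : a ∉ Nminus g)
    (hb : b ∉ Dset g ∪ Cset g ∪ Nplus g)
    (t : ℝ) (ht : t ∈ Set.Icc a b) :
    (tstar g t ∈ D1 g a b ∪ D2 g a b ∪ D3 g a b →
      (SDiffAt g a b (jump g) t ↔
        Filter.Tendsto (fun s => (g s - g t)⁻¹ • jump g s)
          (sFilter g a b (tstar g t) ⊓ 𝓟 (Dset g)) (𝓝 (0 : ℝ)))) ∧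
    (tstar g t ∉ D1 g a b ∪ D2 g a b ∪ D3 g a b → SDiffAt g a b (jump g) t) ∧
    (∀ L : ℝ, HasSDerivAt g a b (jump g) t L →
      L = -(Set.indicator (Dset g) (fun _ => (1 : ℝ)) (tstar g t))) := by
  have hbD : b ∉ Dset g := fun h => hb (Or.inl (Or.inl h))
  have hbC : b ∉ Cset g := fun h => hb (Or.inl (Or.inr h))
  have hbN : b ∉ Nplus g := fun h => hb (Or.inr h)
  set x := tstar g t with hxdef
  have hkey : g x = g t ∧ a ≤ x ∧ x ≤ b := by
    by_cases hC : t ∈ Cset g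
    · obtain ⟨h1, h2, h3⟩ := tstar_facts hlc hC ht.2 hbC
      exact ⟨h3, le_trans ht.1 h1.le, h2⟩
    · have hxt : x = t := by rw [hxdef, tstar, if_neg hC]
      rw [hxt]; exact ⟨rfl, ht.1, ht.2⟩
  obtain ⟨hgx, hax, hxb⟩ := hkey
  set χ : ℝ := Set.indicator (Dset g) (fun _ => (1:ℝ)) x with hχ
  set F := sFilter g a b x with hF
  set A : ℝ → ℝ := fun s => (g s - g x)⁻¹ * jump g s with hA
  set c : ℝ → ℝ := fun s => (g s - g x)⁻¹ * jump g x with hcdef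
  have hQ : ∀ (L : ℝ), HasSDerivAt g a b (jump g) t L ↔
      Tendsto (fun s => A s - c s) F (𝓝 L) := by
    intro L
    have h0 : HasSDerivAt g a b (jump g) t L ↔
        Tendsto (fun s => (g s - g x)⁻¹ • (jump g s - jump g x)) F (𝓝 L) := Iff.rfl
    rw [h0]
    exact tendsto_congr (fun s => by simp only [hA, hcdef, smul_eq_mul]; ring)
  have hc : Tendsto c F (𝓝 χ) := by
    by_cases hxD : x ∈ Dset g
    · have hxD' : 0 < jump g x := hxD
      have hFle : F ≤ 𝓝[>] x := by
        rw [hF]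
        simp only [sFilter]
        rw [if_pos (Or.inl hxD)]
        exact nhdsWithin_mono _ Set.inter_subset_left
      have h1 : Tendsto (fun s => g s - g x) F (𝓝 (jump g x)) := by
        have h2 := ((tendsto_rLim hg x).mono_left hFle).sub
          (tendsto_const_nhds : Tendsto (fun _ : ℝ => g x) F (𝓝 (g x)))
        simpa [jump] using h2
      have h2 : Tendsto (fun s => (g s - g x)⁻¹) F (𝓝 ((jump g x)⁻¹)) :=
        h1.inv₀ (ne_of_gt hxD')
      have h3 := h2.mul (tendsto_const_nhds : Tendsto (fun _ : ℝ => jump g x) F (𝓝 (jump g x)))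
      rw [inv_mul_cancel₀ (ne_of_gt hxD')] at h3
      have hχ1 : χ = 1 := by rw [hχ, Set.indicator_of_mem hxD]
      rw [hχ1]; exact h3
    · have hχ0 : χ = 0 := by rw [hχ, Set.indicator_of_notMem hxD]
      have hj0 : jump g x = 0 := jump_eq_zero hg hxD
      rw [hχ0]
      refine Tendsto.congr (fun s => ?_) tendsto_const_nhds
      simp only [hcdef, hj0, mul_zero]
  have hd : Dense (Dset g)ᶜ := (countable_Dset hg).dense_compl ℝ
  have pick : ∀ u v : ℝ, u < v → ∃ y, y ∈ Set.Ioo u v ∧ y ∉ Dset g := by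
    intro u v huv
    obtain ⟨y, hy1, hy2⟩ := hd.exists_mem_open isOpen_Ioo (Set.nonempty_Ioo.2 huv)
    exact ⟨y, hy2, hy1⟩
  have hSF : ∃ S : Set ℝ, F = 𝓝[S] x ∧ ∀ δ > 0, ∃ y ∈ S, y ∉ Dset g ∧ |y - x| < δ := by
    by_cases h1 : x ∈ Dset g ∨ x ∈ Nplus g ∨ x = a
    · refine ⟨Set.Ioi x ∩ Set.Icc a b, by rw [hF]; simp only [sFilter]; rw [if_pos h1], ?_⟩
      have hxb' : x < b := by
        rcases h1 with h | h | h
        · exact lt_of_le_of_ne hxb (fun he => hbD (he ▸ h))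
        · exact lt_of_le_of_ne hxb (fun he => hbN (he ▸ h))
        · rw [h]; exact hab
      intro δ hδ
      obtain ⟨y, hy, hyD⟩ := pick x (min (x + δ) b) (lt_min (by linarith) hxb')
      have hy2 := hy.2
      have hm1 : min (x + δ) b ≤ x + δ := min_le_left _ _
      have hm2 : min (x + δ) b ≤ b := min_le_right _ _
      refine ⟨y, ⟨hy.1, le_trans hax hy.1.le, by linarith [hy.1.le]⟩, hyD, ?_⟩
      rw [abs_of_pos (by linarith [hy.1] : (0:ℝ) < y - x)]
      linarith [hy.1]
    · by_cases h2 : x ∈ Nminus g ∨ x = b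
      · refine ⟨Set.Iio x ∩ Set.Icc a b,
          by rw [hF]; simp only [sFilter]; rw [if_neg h1, if_pos h2], ?_⟩
        have hax' : a < x := by
          rcases h2 with h | h
          · exact lt_of_le_of_ne hax (fun he => ha (he ▸ h))
          · rw [h]; exact hab
        intro δ hδ
        obtain ⟨y, hy, hyD⟩ := pick (max (x - δ) a) x (max_lt (by linarith) hax')
        have hm1 : x - δ ≤ max (x - δ) a := le_max_left _ _
        have hm2 : a ≤ max (x - δ) a := le_max_right _ _
        refine ⟨y, ⟨hy.2, by linarith [hy.1], le_trans hy.2.le hxb⟩, hyD, ?_⟩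
        rw [abs_of_neg (by linarith [hy.2] : y - x < 0)]
        linarith [hy.1]
      · refine ⟨Set.Icc a b \ {x},
          by rw [hF]; simp only [sFilter]; rw [if_neg h1, if_neg h2], ?_⟩
        intro δ hδ
        rcases lt_or_ge x b with hxb' | hxb'
        · obtain ⟨y, hy, hyD⟩ := pick x (min (x + δ) b) (lt_min (by linarith) hxb')
          have hm1 : min (x + δ) b ≤ x + δ := min_le_left _ _
          have hm2 : min (x + δ) b ≤ b := min_le_right _ _
          refine ⟨y, ⟨⟨le_trans hax hy.1.le, by linarith [hy.2]⟩, ?_⟩, hyD, ?_⟩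
          · simp only [Set.mem_singleton_iff]
            exact ne_of_gt hy.1
          · rw [abs_of_pos (by linarith [hy.1] : (0:ℝ) < y - x)]
            linarith [hy.2]
        · have hax' : a < x := lt_of_lt_of_le hab hxb'
          obtain ⟨y, hy, hyD⟩ := pick (max (x - δ) a) x (max_lt (by linarith) hax')
          have hm1 : x - δ ≤ max (x - δ) a := le_max_left _ _
          have hm2 : a ≤ max (x - δ) a := le_max_right _ _
          refine ⟨y, ⟨⟨by linarith [hy.1], le_trans hy.2.le hxb⟩, ?_⟩, hyD, ?_⟩
          · simp only [Set.mem_singleton_iff]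
            exact ne_of_lt hy.2
          · rw [abs_of_neg (by linarith [hy.2] : y - x < 0)]
            linarith [hy.1]
  obtain ⟨S, hFS, hSprop⟩ := hSF
  have hNB : (F ⊓ 𝓟 (Dset g)ᶜ).NeBot := by
    rw [hFS, ← nhdsWithin_inter', ← mem_closure_iff_nhdsWithin_neBot, Metric.mem_closure_iff]
    intro ε hε
    obtain ⟨y, hyS, hyD, hyd⟩ := hSprop ε hε
    exact ⟨y, ⟨hyS, hyD⟩, by rw [Real.dist_eq, abs_sub_comm]; exact hyd⟩
  have part3 : ∀ L : ℝ, HasSDerivAt g a b (jump g) t L → L = -χ := by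
    intro L hL
    rw [hQ L] at hL
    have hAten : Tendsto A F (𝓝 (L + χ)) := by
      have h4 := hL.add hc
      refine h4.congr (fun s => ?_)
      show A s - c s + c s = A s
      ring
    have h1 : Tendsto A (F ⊓ 𝓟 (Dset g)ᶜ) (𝓝 (L + χ)) := hAten.mono_left inf_le_left
    have h2 : Tendsto A (F ⊓ 𝓟 (Dset g)ᶜ) (𝓝 0) := by
      refine Tendsto.congr' ?_ tendsto_const_nhds
      filter_upwards [mem_inf_of_right (mem_principal_self _)] with s hs
      simp only [hA, jump_eq_zero hg hs, mul_zero]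
    haveI := hNB
    have h5 := tendsto_nhds_unique h2 h1
    linarith
  have hequiv : SDiffAt g a b (jump g) t ↔ Tendsto A (F ⊓ 𝓟 (Dset g)) (𝓝 0) := by
    constructor
    · rintro ⟨L, hL⟩
      have hLχ := part3 L hL
      rw [hQ L, hLχ] at hL
      have hAten : Tendsto A F (𝓝 0) := by
        have h4 := hL.add hc
        rw [neg_add_cancel] at h4
        refine h4.congr (fun s => ?_)
        show A s - c s + c s = A s
        ring
      exact hAten.mono_left inf_le_left
    · intro hAD
      have hAF : Tendsto A F (𝓝 0) := by
        rw [NormedAddCommGroup.tendsto_nhds_zero] at hAD ⊢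
        intro ε hε
        have h4 := hAD ε hε
        rw [eventually_inf_principal] at h4
        filter_upwards [h4] with s hs
        by_cases hsD : s ∈ Dset g
        · exact hs hsD
        · simp only [hA, jump_eq_zero hg hsD, mul_zero, norm_zero]
          exact hε
      refine ⟨-χ, ?_⟩
      rw [hQ]
      have h5 := hAF.sub hc
      rw [zero_sub] at h5
      exact h5
  refine ⟨fun _ => ?_, fun hnot => ?_, fun L hL => part3 L hL⟩
  · have hfun : (fun s => (g s - g t)⁻¹ • jump g s) = A := by
      funext s
      simp only [hA, smul_eq_mul, hgx]
    rw [hfun]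
    exact hequiv
  · rw [hequiv]
    by_cases hxD : x ∈ Dset g
    · have hxD' : 0 < jump g x := hxD
      have hFle : F ≤ 𝓝[>] x := by
        rw [hF]
        simp only [sFilter]
        rw [if_pos (Or.inl hxD)]
        exact nhdsWithin_mono _ Set.inter_subset_left
      have h1 : Tendsto (jump g) F (𝓝 0) := (tendsto_jump hg x).mono_left hFle
      have h2 : Tendsto (fun s => (g s - g x)⁻¹) F (𝓝 ((jump g x)⁻¹)) := by
        have h0 : Tendsto (fun s => g s - g x) F (𝓝 (jump g x)) := by
          have h2' := ((tendsto_rLim hg x).mono_left hFle).sub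
            (tendsto_const_nhds : Tendsto (fun _ : ℝ => g x) F (𝓝 (g x)))
          simpa [jump] using h2'
        exact h0.inv₀ (ne_of_gt hxD')
      have h3 := h2.mul h1
      rw [mul_zero] at h3
      exact h3.mono_left inf_le_left
    · have hmemx : x ∈ Set.Icc a b := ⟨hax, hxb⟩
      have step : ∀ (T S' : Set ℝ), (T ∩ Dset g ⊆ S' ∩ {x}ᶜ) → ¬ AccPt x (𝓟 S') →
          𝓝[T] x ⊓ 𝓟 (Dset g) = ⊥ := by
        intro T S' hsub hacc
        rw [← nhdsWithin_inter']
        have h1 : 𝓝[T ∩ Dset g] x ≤ 𝓝[{x}ᶜ ∩ S'] x :=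
          nhdsWithin_mono _ (fun s hs => ⟨(hsub hs).2, (hsub hs).1⟩)
        have hacc' : ¬ (𝓝[≠] x ⊓ 𝓟 S').NeBot := hacc
        rw [not_neBot, ← nhdsWithin_inter'] at hacc'
        exact le_bot_iff.1 (hacc' ▸ h1)
      have hbot : F ⊓ 𝓟 (Dset g) = ⊥ := by
        by_cases h1 : x ∈ Dset g ∨ x ∈ Nplus g ∨ x = a
        · rw [hF]
          simp only [sFilter]
          rw [if_pos h1]
          by_cases hxNp : x ∈ Nplus g
          · refine step _ (Dset g ∩ Set.Ioc x b) ?_ ?_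
            · rintro s ⟨⟨hs1, hs2⟩, hsD⟩
              exact ⟨⟨hsD, hs1, hs2.2⟩, by simpa using ne_of_gt hs1⟩
            · exact fun hacc => hnot (Or.inl (Or.inr ⟨⟨hmemx, hxNp⟩, hacc⟩))
          · have hxa : x = a := by
              rcases h1 with h | h | h
              exacts [absurd h hxD, absurd h hxNp, h]
            have hxNm : x ∉ Nminus g := hxa ▸ ha
            refine step _ (Dset g ∩ Set.Icc a b) ?_ ?_
            · rintro s ⟨⟨hs1, hs2⟩, hsD⟩
              exact ⟨⟨hsD, hs2⟩, by simpa using ne_of_gt hs1⟩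
            · refine fun hacc => hnot (Or.inr ⟨⟨hmemx, fun h => ?_⟩, hacc⟩)
              rcases h with (h | h) | h
              exacts [hxNm h, hxNp h, hxD h]
        · by_cases h2 : x ∈ Nminus g ∨ x = b
          · rw [hF]
            simp only [sFilter]
            rw [if_neg h1, if_pos h2]
            by_cases hxNm : x ∈ Nminus g
            · refine step _ (Dset g ∩ Set.Ico a x) ?_ ?_
              · rintro s ⟨⟨hs1, hs2⟩, hsD⟩
                exact ⟨⟨hsD, hs2.1, hs1⟩, by simpa using ne_of_lt hs1⟩
              · exact fun hacc => hnot (Or.inl (Or.inl ⟨⟨hmemx, hxNm⟩, hacc⟩))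
            · have hxNp : x ∉ Nplus g := fun h => h1 (Or.inr (Or.inl h))
              refine step _ (Dset g ∩ Set.Icc a b) ?_ ?_
              · rintro s ⟨⟨hs1, hs2⟩, hsD⟩
                exact ⟨⟨hsD, hs2⟩, by simpa using ne_of_lt hs1⟩
              · refine fun hacc => hnot (Or.inr ⟨⟨hmemx, fun h => ?_⟩, hacc⟩)
                rcases h with (h | h) | h
                exacts [hxNm h, hxNp h, hxD h]
          · rw [hF]
            simp only [sFilter]
            rw [if_neg h1, if_neg h2]
            have hxNm : x ∉ Nminus g := fun h => h2 (Or.inl h)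
            have hxNp : x ∉ Nplus g := fun h => h1 (Or.inr (Or.inl h))
            refine step _ (Dset g ∩ Set.Icc a b) ?_ ?_
            · rintro s ⟨⟨hs1, hs2⟩, hsD⟩
              exact ⟨⟨hsD, hs1⟩, hs2⟩
            · refine fun hacc => hnot (Or.inr ⟨⟨hmemx, fun h => ?_⟩, hacc⟩)
              rcases h with (h | h) | h
              exacts [hxNm h, hxNp h, hxD h]
      rw [hbot]
      exact tendsto_bot
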